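/- arXiv:2106.00121 — 2 statements merged into one kernel-verified Lean document; each statement's English description precedes it below -/
import Mathlib

section
/- Let A be a Poisson process with unit rate and let T > 0. Then for every x with 0 ≤ x ≤ 4T, the probability that sup_{s ∈ [0,T]} |A(s) − s| ≥ x is at most 2·exp(−x²/(8T)). -/
open scoped NNReal ENNReal
open MeasureTheory ProbabilityTheory

section PoissonSupAux
open Real

lemma poisson_mgf (r : ℝ≥0) (c : ℝ) :
    ∫⁻ n, ENNReal.ofReal (Real.exp (c * n)) ∂(poissonMeasure r) =
      ENNReal.ofReal (Real.exp (r * (Real.exp c - 1))) := by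
  rw [lintegral_countable']
  have h1 : ∀ n : ℕ, (poissonMeasure r {n}) = ENNReal.ofReal (poissonPMFReal r n) := by
    intro n
    rw [poissonMeasure_singleton]
    rfl
  have h2 : HasSum (fun n : ℕ => ((r : ℝ) * Real.exp c) ^ n / n.factorial)
      (Real.exp ((r : ℝ) * Real.exp c)) := by
    have := NormedSpace.expSeries_div_hasSum_exp ((r : ℝ) * Real.exp c)
    rwa [← Real.exp_eq_exp_ℝ] at this
  have h3 := h2.mul_left (Real.exp (-(r : ℝ)))
  have hsum : HasSum (fun n : ℕ => Real.exp (c * n) * poissonPMFReal r n)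
      (Real.exp ((r : ℝ) * (Real.exp c - 1))) := by
    have heq : (fun n : ℕ => Real.exp (c * n) * poissonPMFReal r n) =
        fun n : ℕ => Real.exp (-(r : ℝ)) * (((r : ℝ) * Real.exp c) ^ n / n.factorial) := by
      funext n
      unfold poissonPMFReal
      rw [mul_pow, ← Real.exp_nat_mul, mul_comm (n : ℝ) c]
      ring
    have hval : Real.exp (-(r : ℝ)) * Real.exp ((r : ℝ) * Real.exp c) =
        Real.exp ((r : ℝ) * (Real.exp c - 1)) := by
      rw [← Real.exp_add]; ring_nf
    rw [heq, ← hval]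
    exact h3
  calc ∑' n : ℕ, ENNReal.ofReal (Real.exp (c * n)) * poissonMeasure r {n}
      = ∑' n : ℕ, ENNReal.ofReal (Real.exp (c * n) * poissonPMFReal r n) := by
        congr 1; funext n
        rw [h1 n, ← ENNReal.ofReal_mul (Real.exp_nonneg _)]
    _ = ENNReal.ofReal (Real.exp ((r : ℝ) * (Real.exp c - 1))) := by
        rw [← hsum.tsum_eq]
        exact (ENNReal.ofReal_tsum_of_nonneg
          (fun n => mul_nonneg (Real.exp_nonneg _) poissonPMFReal_nonneg) hsum.summable).symm

lemma poisson_rv_mgf {Ω : Type*} [MeasurableSpace Ω] (P : Measure Ω)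
    (X : Ω → ℕ) (hX : Measurable X) (r : ℝ≥0)
    (hl : Measure.map X P = poissonMeasure r) (a b : ℝ) :
    ∫⁻ ω, ENNReal.ofReal (Real.exp (a * X ω + b)) ∂P =
      ENNReal.ofReal (Real.exp ((r : ℝ) * (Real.exp a - 1) + b)) := by
  have hm : Measurable fun ω => ENNReal.ofReal (Real.exp (a * (X ω : ℝ))) := by
    exact ENNReal.measurable_ofReal.comp
      (Real.measurable_exp.comp ((measurable_of_countable fun n : ℕ => a * (n : ℝ)).comp hX))
  have h1 : ∀ ω, ENNReal.ofReal (Real.exp (a * X ω + b)) =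
      ENNReal.ofReal (Real.exp (a * X ω)) * ENNReal.ofReal (Real.exp b) := by
    intro ω
    rw [← ENNReal.ofReal_mul (Real.exp_nonneg _), ← Real.exp_add]
  simp_rw [h1]
  rw [lintegral_mul_const _ hm]
  have h2 : ∫⁻ ω, ENNReal.ofReal (Real.exp (a * X ω)) ∂P
      = ∫⁻ n, ENNReal.ofReal (Real.exp (a * n)) ∂(poissonMeasure r) := by
    rw [← hl]
    exact (lintegral_map (measurable_of_countable fun n : ℕ => ENNReal.ofReal (Real.exp (a * n))) hX).symm
  rw [h2, poisson_mgf, ← ENNReal.ofReal_mul (Real.exp_nonneg _), ← Real.exp_add]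

lemma sum_incr {Ω : Type*} (A : ℝ → Ω → ℕ) (h0 : ∀ ω, A 0 ω = 0)
    {n : ℕ} (t : Fin (n+1) → ℝ) (ht0 : t 0 = 0)
    (ω : Ω) (j : Fin (n+1)) :
    (A (t j) ω : ℝ) = ∑ i ∈ Finset.univ.filter (fun i : Fin n => (i : ℕ) < (j : ℕ)),
      ((A (t i.succ) ω : ℝ) - A (t i.castSucc) ω) := by
  obtain ⟨j, hj⟩ := j
  induction j with
  | zero =>
    have : Finset.univ.filter (fun i : Fin n => (i : ℕ) < 0) = ∅ := by
      apply Finset.filter_false_of_mem; intro i _; omega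
    rw [this, Finset.sum_empty]
    have : (⟨0, hj⟩ : Fin (n+1)) = 0 := rfl
    rw [this, ht0, h0]
    simp
  | succ j ih =>
    have hjn : j < n := by omega
    have hstep : Finset.univ.filter (fun i : Fin n => (i : ℕ) < j + 1)
        = insert ⟨j, hjn⟩ (Finset.univ.filter (fun i : Fin n => (i : ℕ) < j)) := by
      ext i
      simp only [Finset.mem_filter, Finset.mem_insert, Finset.mem_univ, true_and, Fin.ext_iff]
      omega
    rw [hstep, Finset.sum_insert (by simp)]
    rw [← ih (by omega)]
    have h1 : (⟨j, hjn⟩ : Fin n).succ = (⟨j + 1, hj⟩ : Fin (n+1)) := rfl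
    have h2 : (⟨j, hjn⟩ : Fin n).castSucc = (⟨j, by omega⟩ : Fin (n+1)) := rfl
    rw [h1, h2]
    ring

lemma max_ineq {Ω : Type*} [MeasurableSpace Ω] (P : Measure Ω)
    [IsProbabilityMeasure P] (A : ℝ → Ω → ℕ)
    (hmeas : ∀ t, Measurable (A t))
    (h0 : ∀ ω, A 0 ω = 0)
    (hmono : ∀ ω, MonotoneOn (fun s => A s ω) (Set.Ici (0 : ℝ)))
    (hlaw : ∀ s t : ℝ, 0 ≤ s → s ≤ t →
      Measure.map (fun ω => A t ω - A s ω) P = poissonMeasure (t - s).toNNReal)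
    (hindep : ∀ (n : ℕ) (t : Fin (n + 1) → ℝ), (∀ i, 0 ≤ t i) → Monotone t →
      iIndepFun
        (fun (i : Fin n) (ω : Ω) => A (t i.succ) ω - A (t i.castSucc) ω) P)
    {n : ℕ} (t : Fin (n + 1) → ℝ) (ht0 : t 0 = 0) (htm : Monotone t)
    (c l y : ℝ) (hl : 0 ≤ l) :
    P {ω | ∃ k : Fin (n+1), y ≤ c * ((A (t k) ω : ℝ) - t k)} ≤
      ENNReal.ofReal (Real.exp (-(l * y) +
        t (Fin.last n) * (Real.exp (c * l) - 1 - c * l))) := by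
  -- basic facts
  have htnn : ∀ k : Fin (n+1), 0 ≤ t k := fun k => ht0 ▸ htm (Fin.zero_le k)
  have hAmono : ∀ ω, ∀ i j : Fin (n+1), i ≤ j → A (t i) ω ≤ A (t j) ω :=
    fun ω i j hij => hmono ω (htnn i) (htnn j) (htm hij)
  have hcast : ∀ ω, ∀ i j : Fin (n+1), i ≤ j →
      ((A (t j) ω - A (t i) ω : ℕ) : ℝ) = (A (t j) ω : ℝ) - A (t i) ω :=
    fun ω i j hij => Nat.cast_sub (hAmono ω i j hij)
  set X : Fin n → Ω → ℕ := fun i ω => A (t i.succ) ω - A (t i.castSucc) ω with hX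
  have hXmeas : ∀ i, Measurable (X i) := fun i => (hmeas _).sub (hmeas _)
  have hXindep : iIndepFun X P := hindep n t htnn htm
  have hXcast : ∀ (i : Fin n) ω, (X i ω : ℝ) = (A (t i.succ) ω : ℝ) - A (t i.castSucc) ω :=
    fun i ω => hcast ω i.castSucc i.succ (Fin.castSucc_le_succ i)
  -- B process
  set B : Fin (n+1) → Ω → ℝ := fun k ω => c * ((A (t k) ω : ℝ) - t k) with hB
  have hBmeas : ∀ k, Measurable (B k) := by
    intro k
    exact measurable_const.mul (((measurable_of_countable fun m : ℕ => (m:ℝ)).comp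
      (hmeas (t k))).sub measurable_const)
  -- first passage events
  set E : Fin (n+1) → Set Ω :=
    fun k => {ω | y ≤ B k ω ∧ ∀ j, j < k → ¬ y ≤ B j ω} with hE
  have hEmeas : ∀ k, MeasurableSet (E k) := by
    intro k
    have hEeq : E k = {ω | y ≤ B k ω} ∩ ⋂ j, ⋂ (_ : j < k), {ω | B j ω < y} := by
      ext ω
      simp only [hE, Set.mem_setOf_eq, Set.mem_inter_iff, Set.mem_iInter, not_le]
    rw [hEeq]
    exact (measurableSet_le measurable_const (hBmeas k)).inter
      (MeasurableSet.iInter fun j => MeasurableSet.iInter fun _ =>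
        measurableSet_lt (hBmeas j) measurable_const)
  have hEdisj : Pairwise (Function.onFun Disjoint E) := by
    intro k k' hkk'
    simp only [Function.onFun]
    rcases lt_or_gt_of_ne hkk' with h | h
    · rw [Set.disjoint_left]
      rintro ω ⟨h1, _⟩ ⟨_, h2⟩
      exact h2 k h h1
    · rw [Set.disjoint_left]
      rintro ω ⟨_, h2⟩ ⟨h1, _⟩
      exact h2 k' h h1
  have hEunion : {ω | ∃ k : Fin (n+1), y ≤ c * ((A (t k) ω : ℝ) - t k)} = ⋃ k, E k := by
    ext ω
    simp only [Set.mem_setOf_eq, Set.mem_iUnion]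
    constructor
    · rintro ⟨k, hk⟩
      classical
      have hne : (Finset.univ.filter (fun k : Fin (n+1) => y ≤ B k ω)).Nonempty :=
        ⟨k, by simp [hB, hk]⟩
      set k0 := (Finset.univ.filter (fun k : Fin (n+1) => y ≤ B k ω)).min' hne with hk0
      have hk0mem := Finset.min'_mem _ hne
      rw [Finset.mem_filter] at hk0mem
      refine ⟨k0, hk0mem.2, fun j hj hyj => ?_⟩
      have : k0 ≤ j := Finset.min'_le _ _ (by simp [hyj])
      exact absurd hj (not_lt.mpr this)
    · rintro ⟨k, hk, _⟩
      exact ⟨k, hk⟩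
  classical
  set T : ℝ := t (Fin.last n) with hTdef
  set Z : Fin (n+1) → Ω → ℝ≥0∞ :=
    fun k => (E k).indicator (fun ω => ENNReal.ofReal (Real.exp (l * B k ω))) with hZ
  set D : Fin (n+1) → Ω → ℕ := fun k ω => A T ω - A (t k) ω with hD
  set W : Fin (n+1) → Ω → ℝ≥0∞ :=
    fun k ω => ENNReal.ofReal (Real.exp (l * c * (D k ω : ℝ) + -(l * c) * (T - t k))) with hW
  have hZmeas : ∀ k, Measurable (Z k) := by
    intro k
    exact ((ENNReal.measurable_ofReal.comp
      (Real.measurable_exp.comp (measurable_const.mul (hBmeas k)))).indicator (hEmeas k))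
  have hWmeas : ∀ k, Measurable (W k) := by
    intro k
    refine ENNReal.measurable_ofReal.comp (Real.measurable_exp.comp ?_)
    exact (measurable_const.mul ((measurable_of_countable fun m : ℕ => (m : ℝ)).comp
      ((hmeas T).sub (hmeas (t k))))).add measurable_const
  -- the partial sum identity
  have hpsum : ∀ (k : Fin (n+1)) (j : Fin (n+1)), j ≤ k → ∀ ω,
      (∑ i : {i : Fin n // i ∈ Finset.univ.filter (fun i : Fin n => (i : ℕ) < (k : ℕ))},
        (if ((i : Fin n) : ℕ) < (j : ℕ) then ((X (i : Fin n) ω : ℝ)) else 0))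
      = (A (t j) ω : ℝ) := by
    intro k j hjk ω
    rw [Finset.sum_coe_sort _ (fun i : Fin n => if (i : ℕ) < (j : ℕ) then (X i ω : ℝ) else 0)]
    rw [← Finset.sum_filter, Finset.filter_filter]
    have hfeq : (Finset.univ.filter (fun i : Fin n => (i : ℕ) < (k : ℕ) ∧ (i : ℕ) < (j : ℕ)))
        = Finset.univ.filter (fun i : Fin n => (i : ℕ) < (j : ℕ)) := by
      apply Finset.filter_congr
      intro i _
      simp only [eq_iff_iff, and_iff_right_iff_imp]
      intro hij
      exact lt_of_lt_of_le hij (Fin.le_iff_val_le_val.mp hjk)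
    rw [hfeq, sum_incr A h0 t ht0 ω j]
    exact Finset.sum_congr rfl fun i _ => hXcast i ω
  have hfsum : ∀ (j : Fin (n+1)) ω,
      (∑ i ∈ Finset.univ.filter (fun i : Fin n => (i : ℕ) < (j : ℕ)), (X i ω : ℝ))
        = (A (t j) ω : ℝ) := by
    intro j ω
    rw [sum_incr A h0 t ht0 ω j]
    exact Finset.sum_congr rfl fun i _ => hXcast i ω
  have hDsum : ∀ (k : Fin (n+1)) ω,
      (∑ i : {i : Fin n // i ∈ Finset.univ.filter (fun i : Fin n => ¬ (i : ℕ) < (k : ℕ))},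
        ((X (i : Fin n) ω : ℝ))) = (D k ω : ℝ) := by
    intro k ω
    rw [Finset.sum_coe_sort _ (fun i : Fin n => (X i ω : ℝ))]
    have hsplit := Finset.sum_filter_add_sum_filter_not Finset.univ
      (fun i : Fin n => (i : ℕ) < (k : ℕ)) (fun i : Fin n => (X i ω : ℝ))
    have huniv : (∑ i : Fin n, (X i ω : ℝ)) = (A (t (Fin.last n)) ω : ℝ) := by
      have h := hfsum (Fin.last n) ω
      rwa [show Finset.univ.filter (fun i : Fin n => (i : ℕ) < ((Fin.last n : Fin (n+1)) : ℕ))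
          = Finset.univ from Finset.filter_true_of_mem fun i _ => i.isLt] at h
    have hcastk : (D k ω : ℝ) = (A (t (Fin.last n)) ω : ℝ) - (A (t k) ω : ℝ) :=
      hcast ω k (Fin.last n) (Fin.le_last k)
    rw [hcastk, ← huniv, ← hsplit, hfsum k ω]
    ring
  -- independence of Z k and W k
  have hindepZW : ∀ k : Fin (n+1), IndepFun (Z k) (W k) P := by
    intro k
    set Sk := Finset.univ.filter (fun i : Fin n => (i : ℕ) < (k : ℕ)) with hSk
    set Tk := Finset.univ.filter (fun i : Fin n => ¬ (i : ℕ) < (k : ℕ)) with hTk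
    have hdisj : Disjoint Sk Tk := Finset.disjoint_filter_filter_not _ _ _
    have base := hXindep.indepFun_finset Sk Tk hdisj hXmeas
    set φ : ({i // i ∈ Sk} → ℕ) → ℝ≥0∞ := fun v =>
      if (y ≤ c * ((∑ i : {i // i ∈ Sk},
            if ((i : Fin n) : ℕ) < (k : ℕ) then (v i : ℝ) else 0) - t k)
          ∧ ∀ j : Fin (n+1), j < k → ¬ y ≤ c * ((∑ i : {i // i ∈ Sk},
            if ((i : Fin n) : ℕ) < (j : ℕ) then (v i : ℝ) else 0) - t j))
      then ENNReal.ofReal (Real.exp (l * (c * ((∑ i : {i // i ∈ Sk},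
            if ((i : Fin n) : ℕ) < (k : ℕ) then (v i : ℝ) else 0) - t k))))
      else 0 with hφ
    set ψ : ({i // i ∈ Tk} → ℕ) → ℝ≥0∞ := fun v =>
      ENNReal.ofReal (Real.exp (l * c * (∑ i : {i // i ∈ Tk}, (v i : ℝ))
        + -(l * c) * (T - t k))) with hψ
    have hφm : Measurable φ := measurable_of_countable _
    have hψm : Measurable ψ := measurable_of_countable _
    have hiden1 : (fun ω => φ (fun i : {i // i ∈ Sk} => X (i : Fin n) ω)) = Z k := by
      funext ω
      have e1 : ∀ j : Fin (n+1), j ≤ k →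
          (∑ i : {i // i ∈ Sk}, if ((i : Fin n) : ℕ) < (j : ℕ)
            then ((X (i : Fin n) ω : ℝ)) else 0) = (A (t j) ω : ℝ) :=
        fun j hj => hpsum k j hj ω
      have hcond : (y ≤ c * ((∑ i : {i // i ∈ Sk},
            if ((i : Fin n) : ℕ) < (k : ℕ) then ((X (i : Fin n) ω : ℝ)) else 0) - t k)
          ∧ ∀ j : Fin (n+1), j < k → ¬ y ≤ c * ((∑ i : {i // i ∈ Sk},
            if ((i : Fin n) : ℕ) < (j : ℕ) then ((X (i : Fin n) ω : ℝ)) else 0) - t j))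
          ↔ ω ∈ E k := by
        simp only [hE, Set.mem_setOf_eq, hB]
        constructor
        · rintro ⟨h1, h2⟩
          refine ⟨by rwa [e1 k le_rfl] at h1, fun j hj hyj => h2 j hj (by rwa [e1 j hj.le])⟩
        · rintro ⟨h1, h2⟩
          refine ⟨by rwa [e1 k le_rfl], fun j hj hyj => h2 j hj (by rwa [e1 j hj.le] at hyj)⟩
      simp only [hφ]
      rw [if_congr hcond (by rw [e1 k le_rfl]) rfl]
      simp only [hZ, Set.indicator_apply, hB]
    have hiden2 : (fun ω => ψ (fun i : {i // i ∈ Tk} => X (i : Fin n) ω)) = W k := by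
      funext ω
      simp only [hψ, hW]
      rw [hDsum k ω]
    have h := base.comp hφm hψm
    rw [← hiden1, ← hiden2]
    exact h
  have hTle : ∀ k : Fin (n+1), t k ≤ T := fun k => htm (Fin.le_last k)
  have hT0 : 0 ≤ T := htnn (Fin.last n)
  -- value of ∫ W k
  have hWint : ∀ k, ∫⁻ ω, W k ω ∂P =
      ENNReal.ofReal (Real.exp ((T - t k) * (Real.exp (c * l) - 1 - c * l))) := by
    intro k
    have hDmeas : Measurable (D k) := (hmeas T).sub (hmeas (t k))
    have hlawk := hlaw (t k) T (htnn k) (hTle k)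
    have hmgf := poisson_rv_mgf P (D k) hDmeas ((T - t k).toNNReal) hlawk
      (l * c) (-(l * c) * (T - t k))
    simp only [hW]
    rw [hmgf, Real.coe_toNNReal _ (sub_nonneg.mpr (hTle k))]
    congr 1
    rw [mul_comm l c]
    ring
  have hWone : ∀ k, 1 ≤ ∫⁻ ω, W k ω ∂P := by
    intro k
    rw [hWint k, show (1 : ℝ≥0∞) = ENNReal.ofReal (Real.exp 0) by simp]
    apply ENNReal.ofReal_le_ofReal
    apply Real.exp_le_exp.mpr
    have h1 : 0 ≤ Real.exp (c * l) - 1 - c * l := by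
      have := Real.add_one_le_exp (c * l); linarith
    exact mul_nonneg (sub_nonneg.mpr (hTle k)) h1
  -- product identity
  have hZWprod : ∀ k, (fun ω => Z k ω * W k ω)
      = (E k).indicator (fun ω => ENNReal.ofReal (Real.exp (l * B (Fin.last n) ω))) := by
    intro k
    funext ω
    by_cases hω : ω ∈ E k
    · simp only [hZ, hW, Set.indicator_of_mem hω]
      rw [← ENNReal.ofReal_mul (Real.exp_nonneg _), ← Real.exp_add]
      congr 1
      have hc : ((D k ω : ℕ) : ℝ) = (A T ω : ℝ) - (A (t k) ω : ℝ) :=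
        hcast ω k (Fin.last n) (Fin.le_last k)
      simp only [hB]
      rw [hc, ← hTdef]
      ring
    · simp only [hZ, Set.indicator_of_notMem hω, zero_mul]
  -- step 1: lower bound per k
  have hstep1 : ∀ k, ENNReal.ofReal (Real.exp (l * y)) * P (E k) ≤ ∫⁻ ω, Z k ω ∂P := by
    intro k
    simp only [hZ]
    rw [lintegral_indicator (hEmeas k)]
    calc ENNReal.ofReal (Real.exp (l * y)) * P (E k)
        = ∫⁻ _ in E k, ENNReal.ofReal (Real.exp (l * y)) ∂P := (setLIntegral_const _ _).symm
      _ ≤ ∫⁻ ω in E k, ENNReal.ofReal (Real.exp (l * B k ω)) ∂P := by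
          apply setLIntegral_mono' (hEmeas k)
          intro ω hω
          apply ENNReal.ofReal_le_ofReal
          apply Real.exp_le_exp.mpr
          exact mul_le_mul_of_nonneg_left hω.1 hl
  -- chain per k
  have hchain : ∀ k, ∫⁻ ω, Z k ω ∂P ≤
      ∫⁻ ω in E k, ENNReal.ofReal (Real.exp (l * B (Fin.last n) ω)) ∂P := by
    intro k
    calc ∫⁻ ω, Z k ω ∂P ≤ (∫⁻ ω, Z k ω ∂P) * ∫⁻ ω, W k ω ∂P :=
          le_mul_of_one_le_right' (hWone k)
      _ = ∫⁻ ω, (Z k * W k) ω ∂P :=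
          (lintegral_mul_eq_lintegral_mul_lintegral_of_indepFun (hZmeas k) (hWmeas k)
            (hindepZW k)).symm
      _ = ∫⁻ ω, (E k).indicator
            (fun ω => ENNReal.ofReal (Real.exp (l * B (Fin.last n) ω))) ω ∂P := by
          apply lintegral_congr
          intro ω
          have := congrFun (hZWprod k) ω
          simpa using this
      _ = ∫⁻ ω in E k, ENNReal.ofReal (Real.exp (l * B (Fin.last n) ω)) ∂P :=
          lintegral_indicator (hEmeas k) _
  -- total bound
  have htotal : ∑' k : Fin (n+1), ∫⁻ ω in E k,
        ENNReal.ofReal (Real.exp (l * B (Fin.last n) ω)) ∂P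
      ≤ ENNReal.ofReal (Real.exp (T * (Real.exp (c * l) - 1 - c * l))) := by
    rw [← lintegral_iUnion hEmeas hEdisj]
    refine le_trans (setLIntegral_le_lintegral _ _) (le_of_eq ?_)
    have hmap : Measure.map (fun ω => A T ω) P = poissonMeasure T.toNNReal := by
      have h := hlaw 0 T le_rfl hT0
      rw [show (fun ω => A T ω - A 0 ω) = fun ω => A T ω from
        funext fun ω => by rw [h0 ω, Nat.sub_zero]] at h
      rwa [sub_zero] at h
    have hmgf := poisson_rv_mgf P (fun ω => A T ω) (hmeas T) T.toNNReal hmap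
      (l * c) (-(l * c) * T)
    calc ∫⁻ ω, ENNReal.ofReal (Real.exp (l * B (Fin.last n) ω)) ∂P
        = ∫⁻ ω, ENNReal.ofReal (Real.exp (l * c * (A T ω : ℝ) + -(l * c) * T)) ∂P := by
          apply lintegral_congr
          intro ω
          congr 1
          simp only [hB]
          rw [← hTdef]
          ring
      _ = ENNReal.ofReal (Real.exp ((T.toNNReal : ℝ) * (Real.exp (l * c) - 1)
            + -(l * c) * T)) := hmgf
      _ = ENNReal.ofReal (Real.exp (T * (Real.exp (c * l) - 1 - c * l))) := by
          rw [Real.coe_toNNReal _ hT0]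
          congr 1
          rw [mul_comm l c]
          ring
  -- combine
  have hmain : ENNReal.ofReal (Real.exp (l * y))
        * P {ω | ∃ k : Fin (n+1), y ≤ c * ((A (t k) ω : ℝ) - t k)}
      ≤ ENNReal.ofReal (Real.exp (T * (Real.exp (c * l) - 1 - c * l))) := by
    rw [hEunion, measure_iUnion hEdisj hEmeas, ← ENNReal.tsum_mul_left]
    calc ∑' k : Fin (n+1), ENNReal.ofReal (Real.exp (l * y)) * P (E k)
        ≤ ∑' k : Fin (n+1), ∫⁻ ω, Z k ω ∂P := ENNReal.tsum_le_tsum hstep1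
      _ ≤ ∑' k : Fin (n+1), ∫⁻ ω in E k,
            ENNReal.ofReal (Real.exp (l * B (Fin.last n) ω)) ∂P :=
          ENNReal.tsum_le_tsum hchain
      _ ≤ _ := htotal
  have hexp_pos : (0 : ℝ) < Real.exp (l * y) := Real.exp_pos _
  have hne0 : ENNReal.ofReal (Real.exp (l * y)) ≠ 0 :=
    (ENNReal.ofReal_pos.mpr hexp_pos).ne'
  have hnetop : ENNReal.ofReal (Real.exp (l * y)) ≠ ⊤ := ENNReal.ofReal_ne_top
  calc P {ω | ∃ k : Fin (n+1), y ≤ c * ((A (t k) ω : ℝ) - t k)}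
      = (ENNReal.ofReal (Real.exp (l * y)))⁻¹ * (ENNReal.ofReal (Real.exp (l * y))
          * P {ω | ∃ k : Fin (n+1), y ≤ c * ((A (t k) ω : ℝ) - t k)}) := by
        rw [← mul_assoc, ENNReal.inv_mul_cancel hne0 hnetop, one_mul]
    _ ≤ (ENNReal.ofReal (Real.exp (l * y)))⁻¹
          * ENNReal.ofReal (Real.exp (T * (Real.exp (c * l) - 1 - c * l))) :=
        mul_le_mul_right hmain _
    _ = ENNReal.ofReal (Real.exp (-(l * y) + T * (Real.exp (c * l) - 1 - c * l))) := by
        rw [← ENNReal.ofReal_inv_of_pos hexp_pos, ← Real.exp_neg,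
          ← ENNReal.ofReal_mul (Real.exp_nonneg _), ← Real.exp_add]

lemma exp_neg_quad {a : ℝ} (ha : 0 ≤ a) : Real.exp (-a) ≤ 1 - a + a^2/2 := by
  set f : ℝ → ℝ := fun b => 1 - b + b^2/2 - Real.exp (-b) with hf
  have hder : ∀ b : ℝ, HasDerivAt f (-1 + b + Real.exp (-b)) b := by
    intro b
    have h1 : HasDerivAt (fun b : ℝ => Real.exp (-b)) (Real.exp (-b) * (-1)) b :=
      (hasDerivAt_neg b).exp
    have h2 : HasDerivAt (fun b : ℝ => b^2/2) (2 * b^1 / 2) b :=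
      (hasDerivAt_pow 2 b).div_const 2
    have h3 : HasDerivAt (fun b : ℝ => 1 - b) (0 - 1) b :=
      (hasDerivAt_const b 1).sub (hasDerivAt_id b)
    have := (h3.add h2).sub h1
    have this : HasDerivAt f (0 - 1 + 2 * b ^ 1 / 2 - rexp (-b) * -1) b := this
    convert this using 1
    ring
  have hmono : MonotoneOn f (Set.Ici 0) := by
    apply monotoneOn_of_deriv_nonneg (convex_Ici 0)
    · exact Continuous.continuousOn (by continuity)
    · exact fun b _ => (hder b).differentiableAt.differentiableWithinAt
    · intro b hb
      rw [(hder b).deriv]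
      have := Real.add_one_le_exp (-b)
      linarith
  have h0 : f 0 = 0 := by simp [hf]
  have := hmono (Set.self_mem_Ici) (Set.mem_Ici.mpr ha) ha
  rw [h0] at this
  simp only [hf] at this
  linarith

lemma log_quarter {u : ℝ} (hu : 0 ≤ u) (hu4 : u ≤ 4) : u/4 ≤ Real.log (1+u) := by
  have h1u : (0:ℝ) < 1 + u := by linarith
  rw [Real.le_log_iff_exp_le h1u]
  have hconv := convexOn_exp.2 (Set.mem_univ (0:ℝ)) (Set.mem_univ (1:ℝ))
    (show (0:ℝ) ≤ 1 - u/4 by linarith) (show (0:ℝ) ≤ u/4 by linarith)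
    (show (1 - u/4) + u/4 = 1 by ring)
  simp only [smul_eq_mul, mul_zero, mul_one, zero_add, Real.exp_zero] at hconv
  have he := Real.exp_one_lt_d9
  nlinarith

lemma entropy_bound {u : ℝ} (hu : 0 ≤ u) (hu4 : u ≤ 4) :
    u^2/8 ≤ (1+u) * Real.log (1+u) - u := by
  set g : ℝ → ℝ := fun v => (1+v) * Real.log (1+v) - v - v^2/8 with hg
  have hder : ∀ v : ℝ, 0 < 1 + v → HasDerivAt g (Real.log (1+v) - v/4) v := by
    intro v hv
    have h1 : HasDerivAt (fun v : ℝ => 1 + v) 1 v := by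
      simpa using (hasDerivAt_id v).const_add 1
    have hlog : HasDerivAt (fun v : ℝ => Real.log (1+v)) (1/(1+v)) v := by
      simpa using h1.log (ne_of_gt hv)
    have hmul := h1.mul hlog
    have h2 : HasDerivAt (fun v : ℝ => v^2/8) (2 * v^1 / 8) v :=
      (hasDerivAt_pow 2 v).div_const 8
    have := (hmul.sub (hasDerivAt_id v)).sub h2
    have this : HasDerivAt g (1 * log (1 + v) + (1 + v) * (1 / (1 + v)) - 1 - 2 * v ^ 1 / 8) v := this
    convert this using 1
    field_simp
    ring
  have hmono : MonotoneOn g (Set.Icc 0 4) := by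
    apply monotoneOn_of_deriv_nonneg (convex_Icc 0 4)
    · refine ContinuousOn.sub (ContinuousOn.sub (ContinuousOn.mul
        (Continuous.continuousOn (by continuity)) ?_) (Continuous.continuousOn (by continuity)))
        (Continuous.continuousOn (by continuity))
      refine Real.continuousOn_log.comp (Continuous.continuousOn (by continuity)) ?_
      intro v hv
      simp only [Set.mem_compl_iff, Set.mem_singleton_iff]
      rcases hv with ⟨h1, _⟩
      intro hc
      linarith
    · intro v hv
      rw [interior_Icc] at hv
      exact (hder v (by rcases hv with ⟨h1, _⟩; linarith)).differentiableAt.differentiableWithinAt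
    · intro v hv
      rw [interior_Icc] at hv
      rw [(hder v (by rcases hv with ⟨h1, _⟩; linarith)).deriv]
      have := log_quarter hv.1.le hv.2.le
      linarith
  have h0 : g 0 = 0 := by simp [hg]
  have hle := hmono (Set.left_mem_Icc.mpr (by norm_num)) (Set.mem_Icc.mpr ⟨hu, hu4⟩) hu
  rw [h0] at hle
  simp only [hg] at hle
  linarith

end PoissonSupAux

open Real in
/-- Supremum bound for a compensated unit-rate Poisson process: if `A` is a
Poisson counting process of rate 1 (starting from 0, with monotone paths,
independent increments, and `A(t) − A(s)` Poisson distributed with parameter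
`t − s`), then for `T > 0` and `0 ≤ x ≤ 4T`,
`P(sup_{s ∈ [0,T]} |A(s) − s| ≥ x) ≤ 2 exp(−x²/(8T))`. -/
theorem poisson_process_sup_bound {Ω : Type*} [MeasurableSpace Ω] (P : Measure Ω)
    [IsProbabilityMeasure P] (A : ℝ → Ω → ℕ)
    (hmeas : ∀ t, Measurable (A t))
    (h0 : ∀ ω, A 0 ω = 0)
    (hmono : ∀ ω, MonotoneOn (fun s => A s ω) (Set.Ici (0 : ℝ)))
    (hlaw : ∀ s t : ℝ, 0 ≤ s → s ≤ t →
      Measure.map (fun ω => A t ω - A s ω) P = poissonMeasure (t - s).toNNReal)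
    (hindep : ∀ (n : ℕ) (t : Fin (n + 1) → ℝ), (∀ i, 0 ≤ t i) → Monotone t →
      iIndepFun
        (fun (i : Fin n) (ω : Ω) => A (t i.succ) ω - A (t i.castSucc) ω) P)
    (T x : ℝ) (hT : 0 < T) (hx0 : 0 ≤ x) (hx : x ≤ 4 * T) :
    P {ω | x ≤ ⨆ s : Set.Icc (0 : ℝ) T, |(A (s : ℝ) ω : ℝ) - (s : ℝ)|} ≤
      ENNReal.ofReal (2 * Real.exp (-x ^ 2 / (8 * T))) := by
  classical
  set l1 : ℝ := Real.log (1 + x / T) with hl1def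
  set l2 : ℝ := x / (2 * T) with hl2def
  have hxT : 0 ≤ x / T := div_nonneg hx0 hT.le
  have hl1 : 0 ≤ l1 := Real.log_nonneg (by linarith)
  have hl2 : 0 ≤ l2 := by positivity
  set C1 : ℝ := T * (Real.exp (1 * l1) - 1 - 1 * l1) with hC1
  set C2 : ℝ := T * (Real.exp ((-1) * l2) - 1 - (-1) * l2) with hC2
  have hbound : ∀ n : ℕ, 0 < n →
      P {ω | x ≤ ⨆ s : Set.Icc (0 : ℝ) T, |(A (s : ℝ) ω : ℝ) - (s : ℝ)|}
        ≤ ENNReal.ofReal (Real.exp (-(l1 * (x - T / n)) + C1))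
          + ENNReal.ofReal (Real.exp (-(l2 * (x - T / n)) + C2)) := by
    intro n hn
    have hnR : (0:ℝ) < n := by exact_mod_cast hn
    set tg : Fin (n+1) → ℝ := fun k => (k : ℕ) * (T / n) with htg
    have htg0 : tg 0 = 0 := by simp [htg]
    have hTn : (0:ℝ) < T / n := by positivity
    have htgmono : Monotone tg := by
      intro i j hij
      simp only [htg]
      have hc : ((i : ℕ) : ℝ) ≤ ((j : ℕ) : ℝ) := by exact_mod_cast hij
      exact mul_le_mul_of_nonneg_right hc hTn.le
    have htglast : tg (Fin.last n) = T := by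
      simp only [htg, Fin.last]
      field_simp
    have hsub : {ω | x ≤ ⨆ s : Set.Icc (0 : ℝ) T, |(A (s : ℝ) ω : ℝ) - (s : ℝ)|}
        ⊆ {ω | ∃ k : Fin (n+1), (x - T / n) ≤ 1 * ((A (tg k) ω : ℝ) - tg k)}
          ∪ {ω | ∃ k : Fin (n+1), (x - T / n) ≤ (-1) * ((A (tg k) ω : ℝ) - tg k)} := by
      intro ω hω
      simp only [Set.mem_setOf_eq] at hω
      obtain ⟨k0, hk0⟩ := Finite.exists_max (fun k : Fin (n+1) => |(A (tg k) ω : ℝ) - tg k|)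
      set K := |(A (tg k0) ω : ℝ) - tg k0| with hK
      have hpt : ∀ s : Set.Icc (0:ℝ) T, |(A (s:ℝ) ω : ℝ) - (s:ℝ)| ≤ K + T / n := by
        rintro ⟨s, hs⟩
        obtain ⟨hs0, hsT⟩ := hs
        set j : ℕ := min (Nat.floor (s / (T / n))) (n - 1) with hj
        have hj1 : j + 1 ≤ n := by
          have := min_le_right (Nat.floor (s / (T / n))) (n - 1)
          omega
        set kl : Fin (n+1) := ⟨j, by omega⟩ with hkl
        set kr : Fin (n+1) := ⟨j+1, by omega⟩ with hkr
        have hfl : (j : ℝ) ≤ s / (T / n) := by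
          have h1 := Nat.floor_le (show 0 ≤ s / (T / n) by positivity)
          have h2 : (j : ℝ) ≤ (Nat.floor (s / (T / n)) : ℝ) := by
            exact_mod_cast min_le_left (Nat.floor (s / (T / n))) (n - 1)
          linarith
        have htl : tg kl ≤ s := by
          have := (le_div_iff₀ hTn).mp hfl
          simpa [htg, hkl] using this
        have htr : s ≤ tg kr := by
          rcases le_or_gt (Nat.floor (s / (T / n))) (n - 1) with hc | hc
          · have hjf : j = Nat.floor (s / (T / n)) := min_eq_left hc
            have h1 : s / (T / n) < j + 1 := by
              rw [hjf]
              exact Nat.lt_floor_add_one _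
            have := (div_lt_iff₀ hTn).mp h1
            have hcoe : ((kr : ℕ) : ℝ) = (j : ℝ) + 1 := by simp [hkr]
            simp only [htg, hcoe]
            linarith
          · have hjf : j = n - 1 := min_eq_right hc.le
            have hkrn : (kr : ℕ) = n := by
              simp only [hkr]
              omega
            have hcoe : ((kr : ℕ) : ℝ) = (n : ℝ) := by rw [hkrn]
            simp only [htg, hcoe]
            rw [mul_div_assoc']
            rw [mul_comm]
            rw [mul_div_assoc]
            rw [div_self (ne_of_gt hnR)]
            linarith
        have hkl0 : 0 ≤ tg kl := by simp only [htg]; positivity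
        have hkr0 : 0 ≤ tg kr := by simp only [htg]; positivity
        have h1 : A (tg kl) ω ≤ A s ω := hmono ω hkl0 hs0 htl
        have h2 : A s ω ≤ A (tg kr) ω := hmono ω hs0 hkr0 htr
        have hgap : tg kr = tg kl + T / n := by
          simp only [htg, hkl, hkr]
          push_cast
          ring
        have hK1 : (A (tg kr) ω : ℝ) - tg kr ≤ K := le_trans (le_abs_self _) (hk0 kr)
        have hK2 : tg kl - (A (tg kl) ω : ℝ) ≤ K := by
          have h := hk0 kl
          rw [abs_sub_comm] at h
          exact le_trans (le_abs_self _) h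
        have hc1 : (A s ω : ℝ) ≤ (A (tg kr) ω : ℝ) := by exact_mod_cast h2
        have hc2 : (A (tg kl) ω : ℝ) ≤ (A s ω : ℝ) := by exact_mod_cast h1
        rw [abs_sub_le_iff]
        constructor
        · linarith
        · linarith
      haveI : Nonempty (Set.Icc (0:ℝ) T) := Set.nonempty_Icc_subtype hT.le
      have hsup := ciSup_le hpt
      have hxK : x - T / n ≤ K := by linarith [le_trans hω hsup]
      rcases abs_cases ((A (tg k0) ω : ℝ) - tg k0) with ⟨heq, _⟩ | ⟨heq, _⟩
      · left
        refine ⟨k0, ?_⟩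
        rw [one_mul]
        rw [hK, heq] at hxK
        exact hxK
      · right
        refine ⟨k0, ?_⟩
        rw [hK, heq] at hxK
        linarith
    refine le_trans (measure_mono hsub) (le_trans (measure_union_le _ _) ?_)
    have h1 := max_ineq P A hmeas h0 hmono hlaw hindep tg htg0 htgmono 1 l1 (x - T / n) hl1
    have h2 := max_ineq P A hmeas h0 hmono hlaw hindep tg htg0 htgmono (-1) l2 (x - T / n) hl2
    rw [htglast] at h1 h2
    exact add_le_add h1 h2
  -- limit n → ∞
  have htend : Filter.Tendsto (fun n : ℕ =>
      ENNReal.ofReal (Real.exp (-(l1 * (x - T / n)) + C1))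
        + ENNReal.ofReal (Real.exp (-(l2 * (x - T / n)) + C2))) Filter.atTop
      (nhds (ENNReal.ofReal (Real.exp (-(l1 * x) + C1))
        + ENNReal.ofReal (Real.exp (-(l2 * x) + C2)))) := by
    have hTn : Filter.Tendsto (fun n : ℕ => T / (n : ℝ)) Filter.atTop (nhds 0) :=
      tendsto_const_div_atTop_nhds_zero_nat T
    have hg : Continuous (fun ε : ℝ =>
        ENNReal.ofReal (Real.exp (-(l1 * (x - ε)) + C1))
          + ENNReal.ofReal (Real.exp (-(l2 * (x - ε)) + C2))) := by
      have hin1 : Continuous fun ε : ℝ => -(l1 * (x - ε)) + C1 :=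
        ((continuous_const.mul (continuous_const.sub continuous_id)).neg).add continuous_const
      have hin2 : Continuous fun ε : ℝ => -(l2 * (x - ε)) + C2 :=
        ((continuous_const.mul (continuous_const.sub continuous_id)).neg).add continuous_const
      exact (ENNReal.continuous_ofReal.comp (Real.continuous_exp.comp hin1)).add
        (ENNReal.continuous_ofReal.comp (Real.continuous_exp.comp hin2))
    have := (hg.tendsto 0).comp hTn
    simpa [Function.comp_def] using this
  have hlim : P {ω | x ≤ ⨆ s : Set.Icc (0 : ℝ) T, |(A (s : ℝ) ω : ℝ) - (s : ℝ)|}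
      ≤ ENNReal.ofReal (Real.exp (-(l1 * x) + C1))
        + ENNReal.ofReal (Real.exp (-(l2 * x) + C2)) :=
    ge_of_tendsto htend (Filter.eventually_atTop.mpr ⟨1, fun n hn => hbound n hn⟩)
  refine le_trans hlim ?_
  -- final numeric bounds
  have h1u : (0:ℝ) < 1 + x / T := by linarith
  have hterm1 : Real.exp (-(l1 * x) + C1) ≤ Real.exp (-x ^ 2 / (8 * T)) := by
    apply Real.exp_le_exp.mpr
    have hexp : Real.exp l1 = 1 + x / T := Real.exp_log h1u
    have hu4 : x / T ≤ 4 := by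
      rw [div_le_iff₀ hT]
      linarith
    have hent := entropy_bound hxT hu4
    have hTent := mul_le_mul_of_nonneg_left hent hT.le
    have e1 : T * ((x / T) ^ 2 / 8) = x ^ 2 / (8 * T) := by
      field_simp
    have e2 : T * ((1 + x / T) * Real.log (1 + x / T) - x / T)
        = T * Real.log (1 + x / T) + x * Real.log (1 + x / T) - x := by
      field_simp
    rw [e1, e2] at hTent
    simp only [hC1, one_mul, hexp, hl1def, Real.exp_log h1u]
    have e3 : T * (1 + x / T - 1 - Real.log (1 + x / T))
        = x - T * Real.log (1 + x / T) := by
      field_simp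
      ring
    rw [e3]
    have hneg : -x ^ 2 / (8 * T) = -(x ^ 2 / (8 * T)) := by ring
    rw [hneg]
    linarith
  have hterm2 : Real.exp (-(l2 * x) + C2) ≤ Real.exp (-x ^ 2 / (8 * T)) := by
    apply Real.exp_le_exp.mpr
    have ha := exp_neg_quad hl2
    have e3 : l2 * x = x ^ 2 / (2 * T) := by
      rw [hl2def]
      field_simp
    have e4 : T * (l2 ^ 2 / 2) = x ^ 2 / (8 * T) := by
      rw [hl2def]
      field_simp
      ring
    have hmul : T * (Real.exp (-l2) - 1 + l2) ≤ T * (l2 ^ 2 / 2) :=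
      mul_le_mul_of_nonneg_left (by linarith) hT.le
    have e5 : x ^ 2 / (2 * T) = 4 * (x ^ 2 / (8 * T)) := by ring
    have e6 : 0 ≤ x ^ 2 / (8 * T) := by positivity
    simp only [hC2, neg_one_mul]
    rw [e4] at hmul
    have hC2' : T * (Real.exp (-l2) - 1 - -l2) = T * (Real.exp (-l2) - 1 + l2) := by ring
    rw [hC2']
    have hneg : -x ^ 2 / (8 * T) = -(x ^ 2 / (8 * T)) := by ring
    rw [hneg]
    linarith
  rw [← ENNReal.ofReal_add (Real.exp_nonneg _) (Real.exp_nonneg _)]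
  apply ENNReal.ofReal_le_ofReal
  have : 2 * Real.exp (-x ^ 2 / (8 * T))
      = Real.exp (-x ^ 2 / (8 * T)) + Real.exp (-x ^ 2 / (8 * T)) := by ring
  rw [this]
  exact add_le_add hterm1 hterm2
end

section
/- Let {Φ_i : i ≥ 1} be independent nonnegative random variables adapted to a filtration {F_i}, and suppose there are constants c, c₁ > 0 and θ ∈ (0,1) such that P(Φ_i ≥ x | F_{i−1}) ≤ c·exp(−c₁ x^θ) for all x ≥ 0 and i ≥ 1. Set μ := ∫₀^∞ c·exp(−c₁ x^θ) dx. Then there exist constants c₂, c₃ > 0 (depending only on c, c₁, θ) such that for every a ≥ 4μ and every n ≥ 1, P(Σ_{i=1}^n Φ_i ≥ a·n) ≤ c₂·(1 + n^{1/(2+θ)} / a^{θ/(2+θ)})·exp(−c₃·(a²n)^{θ/(2+θ)}). -/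
open MeasureTheory ProbabilityTheory Real Set Nat

lemma aux_chord {M x l : ℝ} (hM : 0 < M) (hx0 : 0 ≤ x) (hxM : x ≤ M) :
    Real.exp (l * x) ≤ 1 + (x / M) * (Real.exp (l * M) - 1) := by
  have ht0 : 0 ≤ x / M := div_nonneg hx0 hM.le
  have ht1 : x / M ≤ 1 := (div_le_one hM).2 hxM
  have h := convexOn_exp.2 (Set.mem_univ (0 : ℝ)) (Set.mem_univ (l * M))
    (by linarith : (0:ℝ) ≤ 1 - x / M) ht0 (by ring)
  simp only [smul_eq_mul, mul_zero, Real.exp_zero] at h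
  have hx' : 0 + x / M * (l * M) = l * x := by
    field_simp; ring
  rw [hx'] at h
  linarith

lemma aux_pow_le_exp (x : ℝ) (hx : 0 ≤ x) (k : ℕ) : x ^ k / k ! ≤ Real.exp x := by
  calc x ^ k / (k ! : ℝ) ≤ ∑ i ∈ Finset.range (k + 1), x ^ i / i ! := by
        refine Finset.single_le_sum (f := fun i => x ^ i / (i ! : ℝ)) ?_ (Finset.self_mem_range_succ k)
        intro i _
        positivity
    _ ≤ Real.exp x := Real.sum_le_exp_of_nonneg hx _

lemma aux_meas_g (c c₁ θ : ℝ) : Measurable (fun x : ℝ => c * Real.exp (-c₁ * x ^ θ)) := by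
  fun_prop

lemma aux_integrable_g {c c₁ θ : ℝ} (hc : 0 < c) (hc₁ : 0 < c₁) (hθ0 : 0 < θ) :
    IntegrableOn (fun x : ℝ => c * Real.exp (-c₁ * x ^ θ)) (Set.Ioi 0) := by
  have hmeas := aux_meas_g c c₁ θ
  rw [show Set.Ioi (0:ℝ) = Set.Ioc 0 1 ∪ Set.Ioi 1 from (Set.Ioc_union_Ioi_eq_Ioi zero_le_one).symm,
    integrableOn_union]
  constructor
  · refine Integrable.mono'
      (integrableOn_const (hs := measure_Ioc_lt_top.ne) : IntegrableOn (fun _ : ℝ => c) _ _)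
      hmeas.aestronglyMeasurable.restrict ?_
    rw [ae_restrict_iff' measurableSet_Ioc]
    refine Filter.Eventually.of_forall fun x hx => ?_
    have hx0 : (0:ℝ) ≤ x := le_of_lt hx.1
    have : Real.exp (-c₁ * x ^ θ) ≤ 1 := by
      rw [Real.exp_le_one_iff]
      have : (0:ℝ) ≤ x ^ θ := Real.rpow_nonneg hx0 θ
      nlinarith
    rw [Real.norm_eq_abs, abs_of_nonneg (by positivity)]
    nlinarith
  · set k : ℕ := ⌈2 / θ⌉₊ with hk
    have hkθ : 2 ≤ θ * k := by
      have : 2 / θ ≤ (k : ℝ) := Nat.le_ceil _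
      calc (2:ℝ) = θ * (2 / θ) := by field_simp
        _ ≤ θ * k := by nlinarith
    set C : ℝ := c * k ! / c₁ ^ k with hC
    refine Integrable.mono' (((integrableOn_Ioi_rpow_of_lt (by norm_num : (-2:ℝ) < -1)
      one_pos).const_mul C)) hmeas.aestronglyMeasurable.restrict ?_
    rw [ae_restrict_iff' measurableSet_Ioi]
    refine Filter.Eventually.of_forall fun x hx => ?_
    have hx1 : (1:ℝ) ≤ x := le_of_lt hx
    have hx0 : (0:ℝ) < x := lt_of_lt_of_le one_pos hx1
    rw [Real.norm_eq_abs, abs_of_nonneg (by positivity)]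
    have h1 : (c₁ * x ^ θ) ^ k / (k ! : ℝ) ≤ Real.exp (c₁ * x ^ θ) :=
      aux_pow_le_exp _ (by positivity) k
    have h2 : x ^ (2:ℝ) ≤ (x ^ θ) ^ k := by
      rw [← Real.rpow_natCast (x ^ θ) k, ← Real.rpow_mul hx0.le]
      exact Real.rpow_le_rpow_of_exponent_le hx1 hkθ
    have hexp : (0:ℝ) < Real.exp (c₁ * x ^ θ) := Real.exp_pos _
    have hxp : (0:ℝ) < x ^ (2:ℝ) := Real.rpow_pos_of_pos hx0 _
    have hfac : (0:ℝ) < (k ! : ℝ) := by positivity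
    have h3 : c₁ ^ k * x ^ (2:ℝ) / (k ! : ℝ) ≤ Real.exp (c₁ * x ^ θ) := by
      refine le_trans ((div_le_div_iff_of_pos_right hfac).2 ?_) h1
      rw [mul_pow]
      exact mul_le_mul_of_nonneg_left h2 (pow_pos hc₁ k).le
    have h4 : Real.exp (-c₁ * x ^ θ) = (Real.exp (c₁ * x ^ θ))⁻¹ := by
      rw [← Real.exp_neg]; ring_nf
    rw [Real.rpow_neg hx0.le, h4, ← div_eq_mul_inv, ← div_eq_mul_inv,
      div_le_div_iff₀ hexp hxp]
    have h5 : C * (c₁ ^ k * x ^ (2:ℝ) / (k ! : ℝ)) = c * x ^ (2:ℝ) := by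
      rw [hC]; field_simp
    calc c * x ^ (2:ℝ) = C * (c₁ ^ k * x ^ (2:ℝ) / (k ! : ℝ)) := h5.symm
      _ ≤ C * Real.exp (c₁ * x ^ θ) := by
          have hCpos : 0 < C := by positivity
          exact mul_le_mul_of_nonneg_left h3 hCpos.le

lemma aux_mu_pos {c c₁ θ : ℝ} (hc : 0 < c) (hc₁ : 0 < c₁) (hθ0 : 0 < θ) :
    0 < ∫ x in Set.Ioi (0:ℝ), c * Real.exp (-c₁ * x ^ θ) := by
  have hint := aux_integrable_g hc hc₁ hθ0
  have h1 : (∫ x in Set.Ioc (0:ℝ) 1, c * Real.exp (-c₁)) ≤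
      ∫ x in Set.Ioc (0:ℝ) 1, c * Real.exp (-c₁ * x ^ θ) := by
    refine setIntegral_mono_on (integrableOn_const (hs := measure_Ioc_lt_top.ne))
      (hint.mono_set Set.Ioc_subset_Ioi_self) measurableSet_Ioc ?_
    intro x hx
    have hx0 : (0:ℝ) ≤ x := hx.1.le
    have hxθ : x ^ θ ≤ 1 := Real.rpow_le_one hx0 hx.2 hθ0.le
    have : -c₁ ≤ -c₁ * x ^ θ := by nlinarith
    exact mul_le_mul_of_nonneg_left (Real.exp_le_exp.2 this) hc.le
  have h2 : (∫ x in Set.Ioc (0:ℝ) 1, c * Real.exp (-c₁ * x ^ θ)) ≤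
      ∫ x in Set.Ioi (0:ℝ), c * Real.exp (-c₁ * x ^ θ) := by
    refine setIntegral_mono_set hint ?_ (HasSubset.Subset.eventuallyLE Set.Ioc_subset_Ioi_self)
    refine Filter.Eventually.of_forall fun x => ?_
    positivity
  have h3 : (∫ x in Set.Ioc (0:ℝ) 1, c * Real.exp (-c₁)) = c * Real.exp (-c₁) := by
    rw [setIntegral_const, measureReal_def, Real.volume_Ioc]
    norm_num
  have : (0:ℝ) < c * Real.exp (-c₁) := by positivity
  linarith

open MeasureTheory ProbabilityTheory
open scoped ENNReal

set_option maxHeartbeats 2000000 in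
/-- Concentration for sums of independent random variables with conditionally
stretched-exponential tails: there are constants `c₂, c₃ > 0` depending only on
`c, c₁, θ` such that for any filtration `F` and any independent, nonnegative,
adapted variables `Φ_i` with `P(Φ_i ≥ x | F_{i−1}) ≤ c e^{−c₁ x^θ}`, setting
`μ = ∫₀^∞ c e^{−c₁ x^θ} dx`, for every `a ≥ 4μ` and `n ≥ 1`,
`P(Σ_{i=1}^n Φ_i ≥ an) ≤ c₂ (1 + n^{1/(2+θ)}/a^{θ/(2+θ)}) e^{−c₃ (a²n)^{θ/(2+θ)}}`. -/
theorem stretched_exponential_concentration (c c₁ θ : ℝ) (hc : 0 < c) (hc₁ : 0 < c₁)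
    (hθ0 : 0 < θ) (hθ1 : θ < 1) :
    ∃ c₂ > (0 : ℝ), ∃ c₃ > (0 : ℝ),
      ∀ (Ω : Type) [MeasurableSpace Ω] (P : Measure Ω) [IsProbabilityMeasure P]
        (F : Filtration ℕ ‹MeasurableSpace Ω›) (Φ : ℕ → Ω → ℝ),
        (∀ i ω, 0 ≤ Φ i ω) →
        Adapted F Φ →
        iIndepFun Φ P →
        (∀ i : ℕ, 1 ≤ i → ∀ x : ℝ, 0 ≤ x →
          ∀ᵐ ω ∂P,
            (P[Set.indicator {ω' | x ≤ Φ i ω'} (fun _ => (1 : ℝ)) | F (i - 1)]) ω ≤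
              c * Real.exp (-c₁ * x ^ θ)) →
        ∀ a : ℝ, 4 * (∫ x in Set.Ioi (0 : ℝ), c * Real.exp (-c₁ * x ^ θ)) ≤ a →
        ∀ n : ℕ, 1 ≤ n →
          P {ω | a * n ≤ ∑ i ∈ Finset.Icc 1 n, Φ i ω} ≤
            ENNReal.ofReal (c₂ * (1 + (n : ℝ) ^ ((1 : ℝ) / (2 + θ)) / a ^ (θ / (2 + θ))) *
              Real.exp (-c₃ * (a ^ 2 * (n : ℝ)) ^ (θ / (2 + θ)))) := by
  -- constants
  set μv : ℝ := ∫ x in Set.Ioi (0 : ℝ), c * Real.exp (-c₁ * x ^ θ) with hμv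
  have hμpos : 0 < μv := aux_mu_pos hc hc₁ hθ0
  have h2θ : (0:ℝ) < 2 + θ := by linarith
  set r : ℝ := θ / (2 + θ) with hrdef
  have hr : 0 < r := div_pos hθ0 h2θ
  set β : ℝ := (16 * μv ^ 2) ^ r with hβdef
  have hβ : 0 < β := Real.rpow_pos_of_pos (by positivity) r
  set κ : ℝ := Real.log 2 - 1/4 with hκdef
  have hκ : 0 < κ := by
    have := Real.log_two_gt_d9
    rw [hκdef]; linarith
  set δ : ℝ := c₁ / 2 with hδdef
  have hδ : 0 < δ := by positivity
  set k₀ : ℕ := ⌈(2 + θ) / θ⌉₊ with hk₀def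
  set K : ℝ := (k₀ ! : ℝ) / (δ * β) ^ k₀ with hKdef
  have hK : 0 < K := by positivity
  clear_value μv r β κ δ k₀ K
  refine ⟨1 + c * K, by positivity, min κ δ, lt_min hκ hδ, ?_⟩
  intro Ω _ P _ F Φ hΦ0 hadp hind htailc a haμ n hn
  have ha : 0 < a := lt_of_lt_of_le (by linarith) haμ
  have hμa4 : μv ≤ a / 4 := by linarith
  have hn1 : (1:ℝ) ≤ (n : ℝ) := by exact_mod_cast hn
  have hnpos : (0:ℝ) < (n : ℝ) := by linarith
  -- measurability
  have hΦm : ∀ i, Measurable (Φ i) := fun i => (hadp i).mono (F.le i) le_rfl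
  -- unconditional tail bound
  have htail : ∀ i : ℕ, 1 ≤ i → ∀ x : ℝ, 0 ≤ x →
      (P {ω | x ≤ Φ i ω}).toReal ≤ c * Real.exp (-c₁ * x ^ θ) := by
    intro i hi x hx
    have hSm : MeasurableSet {ω | x ≤ Φ i ω} := measurableSet_le measurable_const (hΦm i)
    have hfint : Integrable ({ω | x ≤ Φ i ω}.indicator fun _ => (1:ℝ)) P :=
      (integrable_const (1:ℝ)).indicator hSm
    have h1 : ∫ ω, (P[{ω' | x ≤ Φ i ω'}.indicator fun _ => (1:ℝ) | F (i - 1)]) ω ∂P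
        = ∫ ω, ({ω' | x ≤ Φ i ω'}.indicator fun _ => (1:ℝ)) ω ∂P :=
      integral_condExp (F.le (i - 1))
    have h2 : ∫ ω, ({ω' | x ≤ Φ i ω'}.indicator fun _ => (1:ℝ)) ω ∂P
        = (P {ω | x ≤ Φ i ω}).toReal := by
      rw [integral_indicator_const (1:ℝ) hSm]; simp [measureReal_def]
    have h3 : ∫ ω, (P[{ω' | x ≤ Φ i ω'}.indicator fun _ => (1:ℝ) | F (i - 1)]) ω ∂P
        ≤ ∫ _ω, c * Real.exp (-c₁ * x ^ θ) ∂P :=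
      integral_mono_ae integrable_condExp (integrable_const _) (htailc i hi x hx)
    rw [integral_const] at h3
    simp only [probReal_univ, measure_univ, ENNReal.toReal_one, smul_eq_mul, one_mul] at h3
    rw [h1, h2] at h3
    exact h3
  -- truncation level
  set A : ℝ := a ^ 2 * (n : ℝ) with hAdef
  have hA : 0 < A := by positivity
  set M : ℝ := A ^ ((1:ℝ) / (2 + θ)) with hMdef
  have hM : 0 < M := Real.rpow_pos_of_pos hA _
  set T : ℝ := A ^ r with hTdef
  have hT : 0 < T := Real.rpow_pos_of_pos hA _
  have hMθ : M ^ θ = T := by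
    rw [hMdef, ← Real.rpow_mul hA.le, hTdef, hrdef]
    congr 1
    ring
  have hTM2 : T * M ^ 2 = A := by
    rw [hTdef, hMdef, ← Real.rpow_natCast (A ^ ((1:ℝ)/(2+θ))) 2, ← Real.rpow_mul hA.le,
      ← Real.rpow_add hA, hrdef]
    rw [show θ/(2+θ) + 1/(2+θ)*((2:ℕ):ℝ) = 1 by push_cast; field_simp; ring]
    exact Real.rpow_one A
  clear_value A M T
  -- truncated variables
  set ψ : ℕ → Ω → ℝ := fun i ω => min (Φ i ω) M with hψdef
  have hψm : ∀ i, Measurable (ψ i) := fun i => (hΦm i).min measurable_const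
  have hψ0 : ∀ i ω, 0 ≤ ψ i ω := fun i ω => le_min (hΦ0 i ω) hM.le
  have hψle : ∀ i ω, ψ i ω ≤ M := fun i ω => min_le_right _ _
  have hψind : iIndepFun ψ P :=
    hind.comp (fun _ x => min x M) (fun _ => measurable_id.min measurable_const)
  clear_value ψ
  have hψint : ∀ i, Integrable (ψ i) P := by
    intro i
    refine Integrable.mono' (integrable_const M) (hψm i).aestronglyMeasurable ?_
    refine Filter.Eventually.of_forall fun ω => ?_
    rw [Real.norm_eq_abs, abs_of_nonneg (hψ0 i ω)]
    exact hψle i ω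
  -- expectation bound via layercake
  have hEψ : ∀ i : ℕ, 1 ≤ i → ∫ ω, ψ i ω ∂P ≤ μv := by
    intro i hi
    rw [Integrable.integral_eq_integral_meas_lt (hψint i)
      (Filter.Eventually.of_forall fun ω => hψ0 i ω)]
    have hptw : ∀ t : ℝ, t ∈ Set.Ioi (0:ℝ) →
        (P {ω | t < ψ i ω}).toReal ≤ c * Real.exp (-c₁ * t ^ θ) := by
      intro t ht
      refine le_trans ?_ (htail i hi t (le_of_lt ht))
      refine ENNReal.toReal_mono (measure_ne_top _ _) (measure_mono ?_)
      intro ω hω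
      simp only [Set.mem_setOf_eq, hψdef] at hω
      exact le_of_lt (lt_of_lt_of_le hω (min_le_left _ _))
    have hmeas2 : Measurable fun t : ℝ => (P {ω | t < ψ i ω}).toReal := by
      refine Antitone.measurable fun s t hst => ?_
      refine ENNReal.toReal_mono (measure_ne_top _ _) (measure_mono ?_)
      intro ω hω
      exact lt_of_le_of_lt hst hω
    have hint2 : IntegrableOn (fun t : ℝ => (P {ω | t < ψ i ω}).toReal) (Set.Ioi 0) := by
      refine Integrable.mono' (aux_integrable_g hc hc₁ hθ0)
        hmeas2.aestronglyMeasurable.restrict ?_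
      rw [ae_restrict_iff' measurableSet_Ioi]
      refine Filter.Eventually.of_forall fun t ht => ?_
      rw [Real.norm_eq_abs, abs_of_nonneg ENNReal.toReal_nonneg]
      exact hptw t ht
    calc ∫ t in Set.Ioi (0:ℝ), (P {ω | t < ψ i ω}).toReal
        ≤ ∫ t in Set.Ioi (0:ℝ), c * Real.exp (-c₁ * t ^ θ) :=
          setIntegral_mono_on hint2 (aux_integrable_g hc hc₁ hθ0) measurableSet_Ioi hptw
      _ = μv := hμv.symm
  -- union bound part
  have hU : P (⋃ i ∈ Finset.Icc 1 n, {ω | M ≤ Φ i ω})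
      ≤ ENNReal.ofReal ((n : ℝ) * (c * Real.exp (-c₁ * T))) := by
    calc P (⋃ i ∈ Finset.Icc 1 n, {ω | M ≤ Φ i ω})
        ≤ ∑ i ∈ Finset.Icc 1 n, P {ω | M ≤ Φ i ω} := measure_biUnion_finset_le _ _
      _ ≤ ∑ _i ∈ Finset.Icc 1 n, ENNReal.ofReal (c * Real.exp (-c₁ * T)) := by
          refine Finset.sum_le_sum fun i hi => ?_
          have h := htail i (Finset.mem_Icc.1 hi).1 M hM.le
          rw [hMθ] at h
          calc P {ω | M ≤ Φ i ω} = ENNReal.ofReal (P {ω | M ≤ Φ i ω}).toReal :=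
                (ENNReal.ofReal_toReal (measure_ne_top _ _)).symm
            _ ≤ ENNReal.ofReal (c * Real.exp (-c₁ * T)) := ENNReal.ofReal_le_ofReal h
      _ = ENNReal.ofReal ((n : ℝ) * (c * Real.exp (-c₁ * T))) := by
          rw [Finset.sum_const, Nat.card_Icc]
          simp only [Nat.add_sub_cancel, nsmul_eq_mul]
          rw [← ENNReal.ofReal_natCast n, ← ENNReal.ofReal_mul (by positivity)]
  -- Chernoff part
  have hV : P {ω | a * (n:ℝ) ≤ (∑ i ∈ Finset.Icc 1 n, ψ i) ω}
      ≤ ENNReal.ofReal (Real.exp (-κ * T)) := by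
    by_cases hMa : a ≤ M
    · -- Chernoff bound
      set l : ℝ := Real.log 2 / M with hldef
      have hl : 0 ≤ l := div_nonneg (Real.log_nonneg one_le_two) hM.le
      have hlM : l * M = Real.log 2 := div_mul_cancel₀ _ hM.ne'
      have helM : Real.exp (l * M) = 2 := by rw [hlM, Real.exp_log two_pos]
      have hintexp : ∀ i, Integrable (fun ω => Real.exp (l * ψ i ω)) P := by
        intro i
        refine Integrable.mono' (integrable_const (Real.exp (l * M)))
          (((hψm i).const_mul l).exp).aestronglyMeasurable ?_
        refine Filter.Eventually.of_forall fun ω => ?_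
        rw [Real.norm_eq_abs, abs_of_nonneg (Real.exp_pos _).le]
        exact Real.exp_le_exp.2 (mul_le_mul_of_nonneg_left (hψle i ω) hl)
      have hmgf_i : ∀ i ∈ Finset.Icc 1 n, mgf (ψ i) P l ≤ Real.exp (μv / M) := by
        intro i hi
        have hptw : ∀ ω, Real.exp (l * ψ i ω) ≤ 1 + ψ i ω / M := by
          intro ω
          have := aux_chord hM (hψ0 i ω) (hψle i ω) (l := l)
          rw [helM] at this
          calc Real.exp (l * ψ i ω) ≤ 1 + ψ i ω / M * (2 - 1) := this
            _ = 1 + ψ i ω / M := by ring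
        have hstep : mgf (ψ i) P l ≤ 1 + (∫ ω, ψ i ω ∂P) / M := by
          have hint1 : Integrable (fun ω => 1 + ψ i ω / M) P :=
            (integrable_const (1:ℝ)).add ((hψint i).div_const M)
          calc mgf (ψ i) P l ≤ ∫ ω, (1 + ψ i ω / M) ∂P :=
                integral_mono (hintexp i) hint1 hptw
            _ = 1 + (∫ ω, ψ i ω ∂P) / M := by
                rw [integral_add (integrable_const (1:ℝ)) ((hψint i).div_const M),
                  integral_const, integral_div]
                simp
        refine hstep.trans ?_
        have h1 : (∫ ω, ψ i ω ∂P) / M ≤ μv / M := by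
          gcongr
          exact hEψ i (Finset.mem_Icc.1 hi).1
        have h2 : μv / M + 1 ≤ Real.exp (μv / M) := Real.add_one_le_exp _
        linarith
      have hintsum : Integrable (fun ω => Real.exp (l * (∑ i ∈ Finset.Icc 1 n, ψ i) ω)) P :=
        hψind.integrable_exp_mul_sum hψm (fun i _ => hintexp i)
      have hcher := measure_ge_le_exp_mul_mgf (X := ∑ i ∈ Finset.Icc 1 n, ψ i) (μ := P)
        (a * (n:ℝ)) hl hintsum
      have hmgfsum : mgf (∑ i ∈ Finset.Icc 1 n, ψ i) P l ≤ Real.exp (μv / M) ^ n := by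
        rw [hψind.mgf_sum hψm]
        calc ∏ i ∈ Finset.Icc 1 n, mgf (ψ i) P l
            ≤ ∏ _i ∈ Finset.Icc 1 n, Real.exp (μv / M) :=
              Finset.prod_le_prod (fun i _ => mgf_nonneg) hmgf_i
          _ = Real.exp (μv / M) ^ n := by rw [Finset.prod_const, Nat.card_Icc]; simp
      have hTan : T * M ≤ a * (n:ℝ) := by
        have h1 : (T * M) * M ≤ (a * (n:ℝ)) * M := by
          nlinarith [hTM2, mul_le_mul_of_nonneg_right hMa (mul_nonneg ha.le hnpos.le)]
        exact le_of_mul_le_mul_right h1 hM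
      have hexpo : -l * (a * (n:ℝ)) + (n:ℝ) * (μv / M) ≤ -κ * T := by
        have e : -l * (a * (n:ℝ)) + (n:ℝ) * (μv / M)
            = ((n:ℝ) * μv - Real.log 2 * (a * (n:ℝ))) / M := by
          rw [hldef]; field_simp; ring
        rw [e, div_le_iff₀ hM, hκdef]
        have h1 : κ * (T * M) ≤ κ * (a * (n:ℝ)) := mul_le_mul_of_nonneg_left hTan hκ.le
        have h2 : (n:ℝ) * μv ≤ (n:ℝ) * (a / 4) := mul_le_mul_of_nonneg_left hμa4 hnpos.le
        rw [hκdef] at h1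
        nlinarith
      calc P {ω | a * (n:ℝ) ≤ (∑ i ∈ Finset.Icc 1 n, ψ i) ω}
          = ENNReal.ofReal (P {ω | a * (n:ℝ) ≤ (∑ i ∈ Finset.Icc 1 n, ψ i) ω}).toReal :=
            (ENNReal.ofReal_toReal (measure_ne_top _ _)).symm
        _ ≤ ENNReal.ofReal (Real.exp (-κ * T)) := by
            refine ENNReal.ofReal_le_ofReal ?_
            refine hcher.trans ?_
            calc Real.exp (-l * (a * (n:ℝ))) * mgf (∑ i ∈ Finset.Icc 1 n, ψ i) P l
                ≤ Real.exp (-l * (a * (n:ℝ))) * Real.exp (μv / M) ^ n := by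
                  exact mul_le_mul_of_nonneg_left hmgfsum (Real.exp_pos _).le
              _ = Real.exp (-l * (a * (n:ℝ)) + (n:ℝ) * (μv / M)) := by
                  rw [← Real.exp_nat_mul, ← Real.exp_add]
              _ ≤ Real.exp (-κ * T) := Real.exp_le_exp.2 hexpo
    · -- truncated sum cannot reach a*n
      push_neg at hMa
      have hempty : {ω | a * (n:ℝ) ≤ (∑ i ∈ Finset.Icc 1 n, ψ i) ω} = ∅ := by
        refine Set.eq_empty_of_forall_notMem fun ω hω => ?_
        simp only [Set.mem_setOf_eq, Finset.sum_apply] at hω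
        have h1 : ∑ i ∈ Finset.Icc 1 n, ψ i ω ≤ (Finset.Icc 1 n).card • M :=
          Finset.sum_le_card_nsmul _ _ _ (fun i _ => hψle i ω)
        rw [Nat.card_Icc, Nat.add_sub_cancel, nsmul_eq_mul] at h1
        nlinarith
      rw [hempty]
      simp
  -- set inclusion
  have hsub : {ω | a * (n:ℝ) ≤ ∑ i ∈ Finset.Icc 1 n, Φ i ω}
      ⊆ (⋃ i ∈ Finset.Icc 1 n, {ω | M ≤ Φ i ω})
        ∪ {ω | a * (n:ℝ) ≤ (∑ i ∈ Finset.Icc 1 n, ψ i) ω} := by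
    intro ω hω
    by_cases h : ∃ i ∈ Finset.Icc 1 n, M ≤ Φ i ω
    · obtain ⟨i, hi, hMi⟩ := h
      exact Set.mem_union_left _ (Set.mem_biUnion hi hMi)
    · push_neg at h
      refine Set.mem_union_right _ ?_
      have heq : ∀ i ∈ Finset.Icc 1 n, ψ i ω = Φ i ω := by
        intro i hi
        rw [hψdef]
        exact min_eq_left (le_of_lt (h i hi))
      simp only [Set.mem_setOf_eq, Finset.sum_apply]
      rw [Finset.sum_congr rfl heq]
      exact hω
  -- final numeric inequality
  have hTβ : β * (n:ℝ) ^ r ≤ T := by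
    have h16 : 16 * μv ^ 2 ≤ a ^ 2 := by nlinarith
    rw [hTdef, hAdef, Real.mul_rpow (by positivity) hnpos.le, hβdef]
    exact mul_le_mul_of_nonneg_right
      (Real.rpow_le_rpow (by positivity) h16 hr.le) (Real.rpow_nonneg hnpos.le _)
  have hnK : (n:ℝ) * Real.exp (-δ * T) ≤ K := by
    have hrk : 1 ≤ r * k₀ := by
      have h1 : (2 + θ) / θ ≤ (k₀ : ℝ) := by rw [hk₀def]; exact Nat.le_ceil _
      rw [hrdef]
      rw [div_mul_eq_mul_div, le_div_iff₀ h2θ]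
      calc (1:ℝ) * (2 + θ) = θ * ((2 + θ) / θ) := by field_simp
        _ ≤ θ * k₀ := by nlinarith
    have e2 : (δ * β) ^ k₀ * (n:ℝ) ≤ (δ * T) ^ k₀ := by
      have h1 : δ * (β * (n:ℝ) ^ r) ≤ δ * T := mul_le_mul_of_nonneg_left hTβ hδ.le
      have h1' : (δ * β) * (n:ℝ) ^ r ≤ δ * T := by rw [mul_assoc]; exact h1
      have h2 : ((δ * β) * (n:ℝ) ^ r) ^ k₀ ≤ (δ * T) ^ k₀ :=
        pow_le_pow_left₀ (by positivity) h1' k₀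
      refine le_trans ?_ h2
      rw [mul_pow (δ * β) ((n:ℝ) ^ r) k₀]
      have hnn : (0:ℝ) ≤ (δ * β) ^ k₀ := by positivity
      refine mul_le_mul_of_nonneg_left ?_ hnn
      rw [← Real.rpow_natCast ((n:ℝ) ^ r) k₀, ← Real.rpow_mul hnpos.le]
      calc (n:ℝ) = (n:ℝ) ^ (1:ℝ) := (Real.rpow_one _).symm
        _ ≤ (n:ℝ) ^ (r * (k₀:ℝ)) := Real.rpow_le_rpow_of_exponent_le hn1 hrk
    have e1 : (δ * T) ^ k₀ / (k₀ ! : ℝ) ≤ Real.exp (δ * T) :=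
      aux_pow_le_exp _ (by positivity) k₀
    have hfac : (0:ℝ) < (k₀ ! : ℝ) := by positivity
    have hdb : (0:ℝ) < (δ * β) ^ k₀ := by positivity
    have e1' : (δ * T) ^ k₀ ≤ (k₀ ! : ℝ) * Real.exp (δ * T) := by
      rw [div_le_iff₀ hfac] at e1
      linarith
    have h3 : (n:ℝ) ≤ K * Real.exp (δ * T) := by
      rw [hKdef, div_mul_eq_mul_div, le_div_iff₀ hdb]
      nlinarith
    rw [neg_mul, Real.exp_neg, ← div_eq_mul_inv, div_le_iff₀ (Real.exp_pos _)]
    exact h3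
  -- final real inequality
  have hq0 : 0 ≤ (n:ℝ) ^ ((1:ℝ) / (2 + θ)) / a ^ r := by positivity
  have hfinal : (n:ℝ) * (c * Real.exp (-c₁ * T)) + Real.exp (-κ * T)
      ≤ (1 + c * K) * (1 + (n:ℝ) ^ ((1:ℝ) / (2 + θ)) / a ^ r)
        * Real.exp (-min κ δ * T) := by
    have hsplit : Real.exp (-c₁ * T) = Real.exp (-δ * T) * Real.exp (-δ * T) := by
      rw [← Real.exp_add, hδdef]
      congr 1
      ring
    have hA1 : (n:ℝ) * (c * Real.exp (-c₁ * T)) ≤ c * K * Real.exp (-min κ δ * T) := by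
      calc (n:ℝ) * (c * Real.exp (-c₁ * T))
          = c * ((n:ℝ) * Real.exp (-δ * T)) * Real.exp (-δ * T) := by rw [hsplit]; ring
        _ ≤ c * K * Real.exp (-δ * T) :=
            mul_le_mul_of_nonneg_right (mul_le_mul_of_nonneg_left hnK hc.le)
              (Real.exp_pos _).le
        _ ≤ c * K * Real.exp (-min κ δ * T) := by
            refine mul_le_mul_of_nonneg_left (Real.exp_le_exp.2 ?_) (by positivity)
            have : min κ δ ≤ δ := min_le_right _ _
            nlinarith
    have hA2 : Real.exp (-κ * T) ≤ Real.exp (-min κ δ * T) := by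
      refine Real.exp_le_exp.2 ?_
      have : min κ δ ≤ κ := min_le_left _ _
      nlinarith
    have hsum : (n:ℝ) * (c * Real.exp (-c₁ * T)) + Real.exp (-κ * T)
        ≤ (1 + c * K) * Real.exp (-min κ δ * T) := by nlinarith
    refine hsum.trans ?_
    refine mul_le_mul_of_nonneg_right ?_ (Real.exp_pos _).le
    have h1 : (0:ℝ) ≤ 1 + c * K := by positivity
    have h2 : (1 + c * K) * 1
        ≤ (1 + c * K) * (1 + (n:ℝ) ^ ((1:ℝ) / (2 + θ)) / a ^ r) :=
      mul_le_mul_of_nonneg_left (by linarith) h1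
    linarith
  -- final assembly
  have hX0 : 0 ≤ (n:ℝ) * (c * Real.exp (-c₁ * T)) := by positivity
  calc P {ω | a * (n:ℝ) ≤ ∑ i ∈ Finset.Icc 1 n, Φ i ω}
      ≤ P ((⋃ i ∈ Finset.Icc 1 n, {ω | M ≤ Φ i ω})
          ∪ {ω | a * (n:ℝ) ≤ (∑ i ∈ Finset.Icc 1 n, ψ i) ω}) := measure_mono hsub
    _ ≤ P (⋃ i ∈ Finset.Icc 1 n, {ω | M ≤ Φ i ω})
        + P {ω | a * (n:ℝ) ≤ (∑ i ∈ Finset.Icc 1 n, ψ i) ω} := measure_union_le _ _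
    _ ≤ ENNReal.ofReal ((n:ℝ) * (c * Real.exp (-c₁ * T)))
        + ENNReal.ofReal (Real.exp (-κ * T)) := add_le_add hU hV
    _ = ENNReal.ofReal ((n:ℝ) * (c * Real.exp (-c₁ * T)) + Real.exp (-κ * T)) :=
        (ENNReal.ofReal_add hX0 (Real.exp_pos _).le).symm
    _ ≤ ENNReal.ofReal ((1 + c * K) * (1 + (n:ℝ) ^ ((1:ℝ) / (2 + θ)) / a ^ r)
        * Real.exp (-min κ δ * T)) := ENNReal.ofReal_le_ofReal hfinal
end
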